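/- The map ε_T : Ш_N(A) → k defined on pure tensors by ε_T(a₁⊗⋯⊗aₙ) = ε_A(a₁)⋯ε_A(aₙ) is an algebra homomorphism: ε_T(𝔞 ⋄ 𝔟) = ε_T(𝔞)ε_T(𝔟). -/

import Mathlib

open TensorProduct

variable (k A : Type*) [CommRing k] [CommRing A] [Algebra k A]

/-- The pure tensor `a₁ ⊗ ⋯ ⊗ aₘ`, realized inside the tensor algebra
`T(A) = ⊕_{n≥0} A^{⊗n}` as the product `ι a₁ * ⋯ * ι aₘ`. -/
noncomputable def pureTensor (l : List A) : TensorAlgebra k A :=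
  (l.map (TensorAlgebra.ι k)).prod

/-- The underlying module `Ш_N(A) = ⊕_{n≥1} A^{⊗n}` of the free commutative Nijenhuis
algebra on `A`: the span of the nonempty pure tensors inside the tensor algebra. -/
noncomputable def ShN : Submodule k (TensorAlgebra k A) :=
  Submodule.span k {x | ∃ l : List A, l ≠ [] ∧ x = pureTensor k A l}

/-- The right-shift operator `P_r(𝔞) = 1_A ⊗ 𝔞`. -/
noncomputable def Pr : TensorAlgebra k A →ₗ[k] TensorAlgebra k A :=
  LinearMap.mulLeft k (TensorAlgebra.ι k (1 : A))

/-- The defining recursion of the product `⋄` of the free commutative Nijenhuis algebra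
`Ш_N(A)`: for pure tensors `𝔞 = a₁ ⊗ 𝔞′ ∈ A^{⊗m}` and `𝔟 = b₁ ⊗ 𝔟′ ∈ A^{⊗n}`,
`𝔞 ⋄ 𝔟 = a₁b₁` if `m = n = 1`, `𝔞 ⋄ 𝔟 = a₁b₁ ⊗ 𝔟′` if `m = 1, n ≥ 2`,
`𝔞 ⋄ 𝔟 = a₁b₁ ⊗ 𝔞′` if `m ≥ 2, n = 1`, and
`𝔞 ⋄ 𝔟 = a₁b₁ ⊗ (𝔞′ ⋄ (1⊗𝔟′) + (1⊗𝔞′) ⋄ 𝔟′ - 1 ⊗ (𝔞′ ⋄ 𝔟′))` if `m, n ≥ 2`. -/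
def NijRec (d : TensorAlgebra k A →ₗ[k] TensorAlgebra k A →ₗ[k] TensorAlgebra k A) : Prop :=
  (∀ a b : A, d (TensorAlgebra.ι k a) (TensorAlgebra.ι k b) = TensorAlgebra.ι k (a * b)) ∧
  (∀ (a b : A) (m : List A), m ≠ [] →
    d (TensorAlgebra.ι k a) (TensorAlgebra.ι k b * pureTensor k A m) =
      TensorAlgebra.ι k (a * b) * pureTensor k A m) ∧
  (∀ (a b : A) (l : List A), l ≠ [] →
    d (TensorAlgebra.ι k a * pureTensor k A l) (TensorAlgebra.ι k b) =
      TensorAlgebra.ι k (a * b) * pureTensor k A l) ∧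
  (∀ (a b : A) (l m : List A), l ≠ [] → m ≠ [] →
    d (TensorAlgebra.ι k a * pureTensor k A l) (TensorAlgebra.ι k b * pureTensor k A m) =
      TensorAlgebra.ι k (a * b) *
        (d (pureTensor k A l) (Pr k A (pureTensor k A m)) +
         d (Pr k A (pureTensor k A l)) (pureTensor k A m) -
         Pr k A (d (pureTensor k A l) (pureTensor k A m))))


lemma pure_cons (a : A) (l : List A) :
    TensorAlgebra.ι k a * pureTensor k A l = pureTensor k A (a :: l) := by
  simp [pureTensor]

lemma mem_pure (l : List A) (h : l ≠ []) : pureTensor k A l ∈ ShN k A :=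
  Submodule.subset_span ⟨l, h, rfl⟩

lemma mul_iota_mem (c : A) : ∀ x ∈ ShN k A, TensorAlgebra.ι k c * x ∈ ShN k A := by
  intro x hx
  induction hx using Submodule.span_induction with
  | mem x hx =>
    obtain ⟨l, hl, rfl⟩ := hx
    rw [pure_cons]
    exact mem_pure k A _ (by simp)
  | zero => simp
  | add x y hx hy ihx ihy => rw [mul_add]; exact add_mem ihx ihy
  | smul r x hx ih => rw [mul_smul_comm]; exact Submodule.smul_mem _ _ ih

lemma Pr_mem : ∀ x ∈ ShN k A, Pr k A x ∈ ShN k A := by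
  intro x hx
  exact mul_iota_mem k A 1 x hx

section

variable (epsA : A →ₐ[k] k) (ET : TensorAlgebra k A →ₗ[k] k)
  (hET : ∀ (a : A) (l : List A),
    ET (TensorAlgebra.ι k a * pureTensor k A l) = epsA a * (l.map epsA).prod)

include hET

lemma ET_pure (l : List A) (h : l ≠ []) :
    ET (pureTensor k A l) = (l.map epsA).prod := by
  obtain ⟨a, l', rfl⟩ := List.exists_cons_of_ne_nil h
  rw [← pure_cons, hET, List.map_cons, List.prod_cons]

lemma ET_iota_mul (c : A) : ∀ x ∈ ShN k A, ET (TensorAlgebra.ι k c * x) = epsA c * ET x := by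
  intro x hx
  induction hx using Submodule.span_induction with
  | mem x hx =>
    obtain ⟨l, hl, rfl⟩ := hx
    rw [hET, ET_pure k A epsA ET hET l hl]
  | zero => simp
  | add x y hx hy ihx ihy => rw [mul_add, map_add, map_add, ihx, ihy, mul_add]
  | smul r x hx ih => rw [mul_smul_comm, map_smul, map_smul, ih, mul_smul_comm]

lemma key (d : TensorAlgebra k A →ₗ[k] TensorAlgebra k A →ₗ[k] TensorAlgebra k A)
    (hd : NijRec k A d) :
    ∀ n : ℕ, ∀ l m : List A, l ≠ [] → m ≠ [] → l.length + m.length ≤ n →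
      d (pureTensor k A l) (pureTensor k A m) ∈ ShN k A ∧
      ET (d (pureTensor k A l) (pureTensor k A m)) =
        ET (pureTensor k A l) * ET (pureTensor k A m) := by
  obtain ⟨hd1, hd2, hd3, hd4⟩ := hd
  have ETi : ∀ c : A, ET (TensorAlgebra.ι k c) = epsA c := by
    intro c
    have := hET c []
    simpa [pureTensor] using this
  intro n
  induction n with
  | zero => intro l m hl hm hlen; simp at hlen; exact absurd hlen.1 hl
  | succ n ih =>
    intro l m hl hm hlen
    obtain ⟨a, l', rfl⟩ := List.exists_cons_of_ne_nil hl
    obtain ⟨b, m', rfl⟩ := List.exists_cons_of_ne_nil hm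
    rcases eq_or_ne l' [] with rfl | hl'
    · rcases eq_or_ne m' [] with rfl | hm'
      · have h1 : pureTensor k A [a] = TensorAlgebra.ι k a := by simp [pureTensor]
        have h2 : pureTensor k A [b] = TensorAlgebra.ι k b := by simp [pureTensor]
        rw [h1, h2, hd1 a b]
        constructor
        · have : TensorAlgebra.ι k (a * b) = pureTensor k A [a * b] := by simp [pureTensor]
          rw [this]; exact mem_pure k A _ (by simp)
        · rw [ETi, ETi, ETi, map_mul]
      · have h1 : pureTensor k A [a] = TensorAlgebra.ι k a := by simp [pureTensor]
        have h2 : pureTensor k A (b :: m') = TensorAlgebra.ι k b * pureTensor k A m' :=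
          (pure_cons k A b m').symm
        rw [h1, h2, hd2 a b m' hm', pure_cons]
        constructor
        · exact mem_pure k A _ (by simp)
        · rw [ET_pure k A epsA ET hET _ (by simp : (a * b) :: m' ≠ []),
            ETi, hET]
          simp [map_mul]
          ring
    · rcases eq_or_ne m' [] with rfl | hm'
      · have h2 : pureTensor k A [b] = TensorAlgebra.ι k b := by simp [pureTensor]
        rw [← pure_cons, h2, hd3 a b l' hl', pure_cons]
        constructor
        · exact mem_pure k A _ (by simp)
        · rw [ET_pure k A epsA ET hET _ (by simp : (a * b) :: l' ≠ []),
            ETi, hET]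
          simp [map_mul]
          ring
      · -- both ≥ 2
        rw [← pure_cons k A a l', ← pure_cons k A b m', hd4 a b l' m' hl' hm']
        have hPrl : Pr k A (pureTensor k A l') = pureTensor k A (1 :: l') := by
          simp only [Pr, LinearMap.mulLeft_apply, pure_cons]
        have hPrm : Pr k A (pureTensor k A m') = pureTensor k A (1 :: m') := by
          simp only [Pr, LinearMap.mulLeft_apply, pure_cons]
        have hlen' : l'.length + m'.length + 1 ≤ n := by
          simp only [List.length_cons] at hlen; omega
        have h1 := ih l' (1 :: m') hl' (by simp) (by simp; omega)
        have h2 := ih (1 :: l') m' (by simp) hm' (by simp; omega)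
        have h3 := ih l' m' hl' hm' (by omega)
        rw [hPrl, hPrm]
        have hX : d (pureTensor k A l') (pureTensor k A (1 :: m')) +
            d (pureTensor k A (1 :: l')) (pureTensor k A m') -
            Pr k A (d (pureTensor k A l') (pureTensor k A m')) ∈ ShN k A :=
          sub_mem (add_mem h1.1 h2.1) (Pr_mem k A _ h3.1)
        constructor
        · exact mul_iota_mem k A _ _ hX
        · rw [ET_iota_mul k A epsA ET hET _ _ hX]
          have hPrET : ET (Pr k A (d (pureTensor k A l') (pureTensor k A m'))) =
              ET (d (pureTensor k A l') (pureTensor k A m')) := by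
            have := ET_iota_mul k A epsA ET hET 1 _ h3.1
            simpa [Pr] using this
          rw [map_sub, map_add, h1.2, h2.2, hPrET, h3.2]
          have e1 : ET (pureTensor k A (1 :: m')) = ET (pureTensor k A m') := by
            rw [ET_pure k A epsA ET hET _ (by simp : (1 :: m') ≠ []),
              ET_pure k A epsA ET hET _ hm']
            simp
          have e2 : ET (pureTensor k A (1 :: l')) = ET (pureTensor k A l') := by
            rw [ET_pure k A epsA ET hET _ (by simp : (1 :: l') ≠ []),
              ET_pure k A epsA ET hET _ hl']
            simp
          rw [e1, e2, hET, hET,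
            ET_pure k A epsA ET hET _ hl', ET_pure k A epsA ET hET _ hm', map_mul]
          ring

end

/-- With `A` a commutative left counital bialgebra with counit `ε_A`, the map
`ε_T : Ш_N(A) → k` defined on pure tensors by `ε_T(a₁⊗⋯⊗aₙ) = ε_A(a₁)⋯ε_A(aₙ)` is an
algebra homomorphism: `ε_T(𝔞 ⋄ 𝔟) = ε_T(𝔞) ε_T(𝔟)`. -/
theorem epsT_mul
    (d : TensorAlgebra k A →ₗ[k] TensorAlgebra k A →ₗ[k] TensorAlgebra k A)
    (hd : NijRec k A d)
    (epsA : A →ₐ[k] k)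
    (ET : TensorAlgebra k A →ₗ[k] k)
    (hET : ∀ (a : A) (l : List A),
        ET (TensorAlgebra.ι k a * pureTensor k A l) = epsA a * (l.map epsA).prod) :
    ∀ x ∈ ShN k A, ∀ y ∈ ShN k A, ET (d x y) = ET x * ET y := by
  have base : ∀ l m : List A, l ≠ [] → m ≠ [] →
      ET (d (pureTensor k A l) (pureTensor k A m)) =
        ET (pureTensor k A l) * ET (pureTensor k A m) := fun l m hl hm =>
    (key k A epsA ET hET d hd (l.length + m.length) l m hl hm le_rfl).2
  intro x hx y hy
  induction hx using Submodule.span_induction with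
  | mem x hx =>
    obtain ⟨l, hl, rfl⟩ := hx
    induction hy using Submodule.span_induction with
    | mem y hy =>
      obtain ⟨m, hm, rfl⟩ := hy
      exact base l m hl hm
    | zero => simp
    | add y z hy hz ihy ihz => rw [map_add, map_add, ihy, ihz, map_add, mul_add]
    | smul r y hy ih => rw [map_smul, map_smul, ih, map_smul, mul_smul_comm]
  | zero => simp
  | add x z hx hz ihx ihz => rw [map_add, LinearMap.add_apply, map_add, ihx, ihz, map_add, add_mul]
  | smul r x hx ih =>
    rw [map_smul, LinearMap.smul_apply, map_smul, ih, map_smul, smul_mul_assoc]
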